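/- Let k ≥ 1, let X ⊂ ℝ^k be a finite point set with |X| ≥ 3, and let T be any spanning tree on vertex set X. Then there exists a Hamiltonian cycle H on X such that Σ_{e ∈ H} |e|^k ≤ (2/3)·3^k·Σ_{e ∈ T} |e|^k. -/

import Mathlib

/-- The `k`-th power cost of an edge (an unordered pair of points) of a geometric graph. -/
noncomputable def edgeCost {V : Type*} [PseudoMetricSpace V] (k : ℕ) (e : Sym2 V) : ℝ :=
  Sym2.lift ⟨fun x y => dist x y ^ k, fun x y => by simp [dist_comm]⟩ e

namespace Stmt8

/-- Rooted trees built by grafting: `graft a b` attaches `b`'s root as a child of `a`'s root. -/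
inductive RTree (V : Type*) where
  | leaf : V → RTree V
  | graft : RTree V → RTree V → RTree V

namespace RTree

variable {V : Type*}

def root : RTree V → V
  | leaf v => v
  | graft a _ => a.root

def vms : RTree V → Multiset V
  | leaf v => {v}
  | graft a b => a.vms + b.vms

def ems : RTree V → Multiset (Sym2 V)
  | leaf _ => 0
  | graft a b => s(a.root, b.root) ::ₘ (a.ems + b.ems)

variable [DecidableEq V]

def attachAt (y x : V) : RTree V → RTree V
  | leaf v => if v = y then graft (leaf v) (leaf x) else leaf v
  | graft a b => if y ∈ a.vms then graft (a.attachAt y x) b else graft a (b.attachAt y x)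

@[simp] lemma root_attachAt (y x : V) (t : RTree V) : (t.attachAt y x).root = t.root := by
  induction t with
  | leaf v => by_cases h : v = y <;> simp [attachAt, h, root]
  | graft a b iha ihb => by_cases h : y ∈ a.vms <;> simp [attachAt, h, root, iha]

omit [DecidableEq V] in
lemma root_mem_vms (t : RTree V) : t.root ∈ t.vms := by
  induction t with
  | leaf v => simp [root, vms]
  | graft a b iha ihb => simp [root, vms]; left; exact iha

lemma vms_attachAt (y x : V) (t : RTree V) (h : y ∈ t.vms) :
    (t.attachAt y x).vms = x ::ₘ t.vms := by
  induction t with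
  | leaf v =>
    simp [vms] at h
    subst h
    simp [attachAt, vms]
    exact Multiset.pair_comm y x
  | graft a b iha ihb =>
    by_cases ha : y ∈ a.vms
    · simp [attachAt, ha, vms, iha ha, Multiset.cons_add]
    · have hb : y ∈ b.vms := by simp [vms] at h; tauto
      simp [attachAt, ha, vms, ihb hb]

lemma ems_attachAt (y x : V) (t : RTree V) (h : y ∈ t.vms) :
    (t.attachAt y x).ems = s(y, x) ::ₘ t.ems := by
  induction t with
  | leaf v =>
    simp [vms] at h
    subst h
    simp [attachAt, ems, root]
  | graft a b iha ihb =>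
    by_cases ha : y ∈ a.vms
    · simp [attachAt, ha, ems, iha ha, root, Multiset.cons_swap, Multiset.cons_add]
    · have hb : y ∈ b.vms := by simp [vms] at h; tauto
      simp [attachAt, ha, ems, ihb hb, root, Multiset.cons_swap]

end RTree

lemma pow_add3_le (k : ℕ) (hk : 1 ≤ k) {x y z : ℝ} (hx : 0 ≤ x) (hy : 0 ≤ y) (hz : 0 ≤ z) :
    (x + y + z) ^ k ≤ 3 ^ (k - 1) * (x ^ k + y ^ k + z ^ k) := by
  obtain ⟨n, rfl⟩ : ∃ n, k = n + 1 := ⟨k - 1, (Nat.succ_pred_eq_of_pos hk).symm⟩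
  have h := pow_sum_le_card_mul_sum_pow (s := (Finset.univ : Finset (Fin 3)))
    (f := ![x, y, z]) (by
      intro i _
      fin_cases i <;> simpa) n
  simpa [Fin.sum_univ_three, Nat.add_sub_cancel] using h

variable {V : Type*} [PseudoMetricSpace V]

noncomputable def pathCost (k : ℕ) : List V → ℝ
  | a :: b :: l => dist a b ^ k + pathCost k (b :: l)
  | _ => 0

@[simp] lemma pathCost_nil (k : ℕ) : pathCost k ([] : List V) = 0 := rfl
@[simp] lemma pathCost_single (k : ℕ) (a : V) : pathCost k [a] = 0 := rfl
lemma pathCost_cons_cons (k : ℕ) (a b : V) (l : List V) :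
    pathCost k (a :: b :: l) = dist a b ^ k + pathCost k (b :: l) := rfl

lemma pathCost_append (k : ℕ) (l₁ l₂ : List V) (h₁ : l₁ ≠ []) (h₂ : l₂ ≠ []) :
    pathCost k (l₁ ++ l₂) =
      pathCost k l₁ + dist (l₁.getLast h₁) (l₂.head h₂) ^ k + pathCost k l₂ := by
  induction l₁ with
  | nil => exact absurd rfl h₁
  | cons a l₁ ih =>
    cases l₁ with
    | nil =>
      cases l₂ with
      | nil => exact absurd rfl h₂
      | cons c l₂ => simp [pathCost_cons_cons]
    | cons b l₁ =>
      have e1 : pathCost k ((a :: b :: l₁) ++ l₂) = dist a b ^ k + pathCost k ((b :: l₁) ++ l₂) :=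
        rfl
      rw [e1, ih (by simp), List.getLast_cons (by simp : (b :: l₁ : List V) ≠ []),
        pathCost_cons_cons]
      ring

lemma pathCost_reverse (k : ℕ) (l : List V) : pathCost k l.reverse = pathCost k l := by
  induction l with
  | nil => rfl
  | cons a l ih =>
    cases l with
    | nil => rfl
    | cons b tl =>
      rw [List.reverse_cons, pathCost_append k _ [a] (by simp) (by simp),
        List.getLast_reverse, pathCost_cons_cons, ih]
      simp [List.head_cons, dist_comm]
      ring

lemma pathCost_eq_sum (k : ℕ) (l : List V) (d0 : V) :
    pathCost k l =
      ∑ i ∈ Finset.range (l.length - 1), dist (l.getD i d0) (l.getD (i + 1) d0) ^ k := by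
  induction l with
  | nil => simp
  | cons a l ih =>
    cases l with
    | nil => simp
    | cons b tl =>
      have hlen : (a :: b :: tl : List V).length - 1 = ((b :: tl : List V).length - 1) + 1 := by
        simp
      rw [hlen, Finset.sum_range_succ', pathCost_cons_cons, ih]
      simp [List.getD_cons_succ, List.getD_cons_zero]
      ring

section Core

variable {V : Type*} [PseudoMetricSpace V]

@[simp] lemma edgeCost_mk (k : ℕ) (x y : V) : edgeCost k s(x, y) = dist x y ^ k := rfl

lemma edgeCost_nonneg (k : ℕ) (e : Sym2 V) : 0 ≤ edgeCost k e := by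
  induction e using Sym2.ind with
  | _ x y => exact pow_nonneg dist_nonneg k

open RTree in
noncomputable def wt (k : ℕ) : RTree V → ℝ
  | .leaf _ => 0
  | .graft a b => dist a.root b.root ^ k + wt k a + wt k b

lemma wt_eq_sum (k : ℕ) (t : RTree V) :
    wt k t = ((t.ems).map (edgeCost k)).sum := by
  induction t with
  | leaf v => simp [wt, RTree.ems]
  | graft a b iha ihb => simp [wt, RTree.ems, iha, ihb]; ring

open RTree in
lemma exists_path (k : ℕ) (hk : 1 ≤ k) (t : RTree V) :
    ∃ (l : List V) (h : l ≠ []),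
      l.head h = t.root ∧ (l : Multiset V) = t.vms ∧
      pathCost k l + 3 ^ (k - 1) * dist t.root (l.getLast h) ^ k ≤
        2 * 3 ^ (k - 1) * wt k t := by
  induction t with
  | leaf v =>
    refine ⟨[v], by simp, rfl, by simp [vms], ?_⟩
    simp [wt, root, zero_pow (by omega : k ≠ 0)]
  | graft a b iha ihb =>
    obtain ⟨la, hna, hha, hma, hia⟩ := iha
    obtain ⟨lb, hnb, hhb, hmb, hib⟩ := ihb
    set c : ℝ := 3 ^ (k - 1) with hc
    have hc1 : (1 : ℝ) ≤ c := one_le_pow₀ (by norm_num : (1:ℝ) ≤ 3)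
    refine ⟨la ++ lb.reverse, by simp [hna], ?_, ?_, ?_⟩
    · rw [List.head_append_left hna]
      exact hha
    · show ((la ++ lb.reverse : List V) : Multiset V) = (a.graft b).vms
      rw [show (a.graft b).vms = a.vms + b.vms from rfl, ← hma, ← hmb,
        ← Multiset.coe_reverse lb]
      exact (Multiset.coe_add la lb.reverse).symm
    · have hrn : lb.reverse ≠ [] := by simp [hnb]
      have hgl : (la ++ lb.reverse).getLast (by simp [hna]) = b.root := by
        rw [List.getLast_append_of_right_ne_nil la lb.reverse hrn, List.getLast_reverse, hhb]
      rw [hgl]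
      rw [pathCost_append k la lb.reverse hna hrn, pathCost_reverse,
        List.head_reverse]
      have hroot : (graft a b).root = a.root := rfl
      rw [hroot]
      set ra := a.root; set rb := b.root
      set xa := la.getLast hna; set yb := lb.getLast hnb
      have h1 : pathCost k la + c * dist ra xa ^ k ≤ 2 * c * wt k a := hia
      have h2 : pathCost k lb + c * dist rb yb ^ k ≤ 2 * c * wt k b := hib
      have h3 : dist xa yb ^ k ≤ c * (dist ra xa ^ k + dist ra rb ^ k + dist rb yb ^ k) := by
        calc dist xa yb ^ k ≤ (dist xa ra + dist ra rb + dist rb yb) ^ k := by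
              apply pow_le_pow_left₀ dist_nonneg
              exact dist_triangle4 xa ra rb yb
          _ ≤ c * (dist xa ra ^ k + dist ra rb ^ k + dist rb yb ^ k) :=
              pow_add3_le k hk dist_nonneg dist_nonneg dist_nonneg
          _ = c * (dist ra xa ^ k + dist ra rb ^ k + dist rb yb ^ k) := by
              rw [dist_comm xa ra]
      have hw : wt k (graft a b) = dist ra rb ^ k + wt k a + wt k b := rfl
      rw [hw]
      linarith

end Core

section Graph

open Finset

variable {V : Type*} [Fintype V] [DecidableEq V]

lemma exists_cross_of_walk (G : SimpleGraph V) (s : Finset V) :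
    ∀ {u v : V}, G.Walk u v → u ∈ s → v ∉ s → ∃ y ∈ s, ∃ x, x ∉ s ∧ G.Adj y x := by
  intro u v w
  induction w with
  | nil => intro h h'; exact absurd h h'
  | @cons u a v hadj p ih =>
    intro hu hv
    by_cases ha : a ∈ s
    · exact ih ha hv
    · exact ⟨u, hu, a, ha, hadj⟩

lemma exists_cross (G : SimpleGraph V) (hG : G.Preconnected) (s : Finset V)
    (hne : s.Nonempty) (hnu : s ≠ Finset.univ) :
    ∃ y ∈ s, ∃ x, x ∉ s ∧ G.Adj y x := by
  obtain ⟨u, hu⟩ := hne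
  obtain ⟨v, hv⟩ : ∃ v, v ∉ s := by
    by_contra h
    push_neg at h
    exact hnu (Finset.eq_univ_iff_forall.2 h)
  exact (hG u v).elim fun w => exists_cross_of_walk G s w hu hv

open RTree in
lemma grow (G : SimpleGraph V) (hG : G.Preconnected) :
    ∀ (m : ℕ) (t : RTree V) (s : Finset V), (Finset.univ \ s).card = m →
      t.vms = s.val → (∀ e ∈ t.ems, e ∈ G.edgeSet) → t.ems.Nodup →
      (∀ e ∈ t.ems, ∀ v ∈ e, v ∈ s) →
      ∃ t' : RTree V, t'.vms = (Finset.univ : Finset V).val ∧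
        (∀ e ∈ t'.ems, e ∈ G.edgeSet) ∧ t'.ems.Nodup := by
  intro m
  induction m with
  | zero =>
    intro t s hcard hv he hn _
    have hs : s = Finset.univ := by
      have h0 : Finset.univ \ s = ∅ := Finset.card_eq_zero.1 hcard
      apply Finset.eq_univ_iff_forall.2
      intro x
      by_contra hx
      have hmem : x ∈ Finset.univ \ s := Finset.mem_sdiff.2 ⟨Finset.mem_univ x, hx⟩
      rw [h0] at hmem
      exact absurd hmem (Finset.notMem_empty x)
    exact ⟨t, by rw [hv, hs], he, hn⟩
  | succ m ih =>
    intro t s hcard hv he hn hend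
    have hsne : s.Nonempty := by
      refine ⟨t.root, ?_⟩
      have := t.root_mem_vms
      rw [hv] at this
      exact this
    have hsnu : s ≠ Finset.univ := by
      intro h
      rw [h] at hcard
      simp at hcard
    obtain ⟨y, hy, x, hx, hadj⟩ := exists_cross G hG s hsne hsnu
    have hyv : y ∈ t.vms := by rw [hv]; exact hy
    refine ih (t.attachAt y x) (insert x s) ?_ ?_ ?_ ?_ ?_
    · have : Finset.univ \ insert x s = (Finset.univ \ s).erase x := by
        ext z
        simp [Finset.mem_sdiff, Finset.mem_erase, Finset.mem_insert]
      rw [this, Finset.card_erase_of_mem (Finset.mem_sdiff.2 ⟨Finset.mem_univ x, hx⟩), hcard]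
      omega
    · rw [RTree.vms_attachAt y x t hyv, hv, Finset.insert_val,
        Multiset.ndinsert_of_notMem (by rwa [← Finset.mem_def])]
    · rw [RTree.ems_attachAt y x t hyv]
      intro e hee
      rcases Multiset.mem_cons.1 hee with h | h
      · subst h; exact hadj
      · exact he e h
    · rw [RTree.ems_attachAt y x t hyv]
      refine Multiset.nodup_cons.2 ⟨?_, hn⟩
      intro hmem
      have := hend _ hmem x (by simp)
      exact hx this
    · rw [RTree.ems_attachAt y x t hyv]
      intro e hee v hve
      rcases Multiset.mem_cons.1 hee with h | h
      · subst h
        rcases Sym2.mem_iff.1 hve with h | h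
        · subst h; exact Finset.mem_insert_of_mem hy
        · subst h; exact Finset.mem_insert_self v s
      · exact Finset.mem_insert_of_mem (hend e h v hve)

lemma exists_spanning_rtree (G : SimpleGraph V) (hG : G.Preconnected) (r : V) :
    ∃ t : RTree V, t.vms = (Finset.univ : Finset V).val ∧
      (∀ e ∈ t.ems, e ∈ G.edgeSet) ∧ t.ems.Nodup := by
  refine grow G hG (Finset.univ \ {r}).card (RTree.leaf r) {r} rfl ?_ ?_ ?_ ?_
  · simp [RTree.vms]
  · intro e he; simp [RTree.ems] at he
  · simp [RTree.ems]
  · intro e he; simp [RTree.ems] at he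

end Graph

end Stmt8

open Stmt8

/-- For `k ≥ 1`, a finite point set `X ⊂ ℝ^k` with `|X| ≥ 3`, and any spanning tree `T`
on `X`, there exists a Hamiltonian cycle `H` on `X` with
`∑_{e ∈ H} |e|^k ≤ (2/3)·3^k·∑_{e ∈ T} |e|^k`. -/
theorem stmt_8 (k : ℕ) (hk : 1 ≤ k)
    (X : Finset (EuclideanSpace ℝ (Fin k))) (hX : 3 ≤ X.card)
    (T : SimpleGraph ↥X) (hT : T.IsTree) :
    ∃ f : ℕ → EuclideanSpace ℝ (Fin k),
      Set.BijOn f (Set.Iio X.card) ↑X ∧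
      ∑ i ∈ Finset.range X.card, dist (f i) (f ((i + 1) % X.card)) ^ k ≤
        (2 / 3 : ℝ) * 3 ^ k * ∑ᶠ e ∈ T.edgeSet, edgeCost k e := by
  classical
  have hXne : X.Nonempty := Finset.card_pos.1 (by omega)
  obtain ⟨r0, hr0⟩ := hXne
  obtain ⟨t, hvms, hedge, hnd⟩ :=
    exists_spanning_rtree T hT.isConnected.preconnected (⟨r0, hr0⟩ : ↥X)
  obtain ⟨l, hne, hhead, hml, hineq⟩ := exists_path k hk t
  set c : ℝ := 3 ^ (k - 1) with hc
  have hc1 : (1 : ℝ) ≤ c := one_le_pow₀ (by norm_num : (1:ℝ) ≤ 3)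
  have hmuniv : (l : Multiset ↥X) = (Finset.univ : Finset ↥X).val := by rw [hml, hvms]
  have hlnodup : l.Nodup := by
    rw [← Multiset.coe_nodup, hmuniv]
    exact (Finset.univ : Finset ↥X).nodup
  have hlen : l.length = X.card := by
    have h1 : Multiset.card (l : Multiset ↥X) = (Finset.univ : Finset ↥X).card := by
      rw [hmuniv]; rfl
    simpa [Fintype.card_coe] using h1
  have hmem : ∀ v : ↥X, v ∈ l := by
    intro v
    rw [← Multiset.mem_coe, hmuniv]
    exact Finset.mem_univ v
  set d0 : ↥X := l.head hne with hd0
  set n := X.card with hn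
  obtain ⟨m, hm⟩ : ∃ m, n = m + 1 := ⟨n - 1, by omega⟩
  refine ⟨fun i => ((l.getD i d0 : ↥X) : EuclideanSpace ℝ (Fin k)), ⟨?_, ?_, ?_⟩, ?_⟩
  · intro i _
    exact (l.getD i d0).2
  · intro i hi j hj hij
    have hi' : i < l.length := by rw [hlen]; exact hi
    have hj' : j < l.length := by rw [hlen]; exact hj
    have h2 : l.getD i d0 = l.getD j d0 := Subtype.coe_injective hij
    rw [List.getD_eq_get l d0 ⟨i, hi'⟩, List.getD_eq_get l d0 ⟨j, hj'⟩] at h2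
    have := List.nodup_iff_injective_get.1 hlnodup h2
    exact congrArg Fin.val this
  · intro x hx
    have hxl : (⟨x, hx⟩ : ↥X) ∈ l := hmem _
    obtain ⟨i, hi⟩ := List.get_of_mem hxl
    refine ⟨i.1, by simpa [Set.mem_Iio, ← hlen] using i.2, ?_⟩
    simp only [List.getD_eq_get l d0 ⟨i.1, i.2⟩]
    rw [Fin.eta, hi]
  · -- the cost bound
    have hfin : T.edgeSet.Finite := Set.toFinite _
    have hfs : ∑ᶠ e ∈ T.edgeSet, edgeCost k e = ∑ e ∈ hfin.toFinset, edgeCost k e := by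
      have h := finsum_mem_coe_finset (s := hfin.toFinset) (f := edgeCost k)
      rw [Set.Finite.coe_toFinset] at h
      exact h
    have hwt : wt k t ≤ ∑ e ∈ hfin.toFinset, edgeCost k e := by
      rw [wt_eq_sum]
      have h1 : (Multiset.map (edgeCost k) t.ems).sum =
          ∑ e ∈ (⟨t.ems, hnd⟩ : Finset (Sym2 ↥X)), edgeCost k e := rfl
      rw [h1]
      apply Finset.sum_le_sum_of_subset_of_nonneg
      · intro e heF
        rw [Set.Finite.mem_toFinset]
        exact hedge e heF
      · intro e _ _
        exact edgeCost_nonneg k e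
    have hlast : l.getD m d0 = l.getLast hne := by
      have hmlt : m < l.length := by omega
      rw [List.getD_eq_get l d0 ⟨m, hmlt⟩, (by simp [List.getLast_eq_getElem] :
        l.getLast hne = l.get ⟨l.length - 1, by omega⟩)]
      apply congrArg
      apply Fin.ext
      show m = l.length - 1
      omega
    have hzero : l.getD 0 d0 = d0 := by
      cases l with
      | nil => exact absurd rfl hne
      | cons a tl => rfl
    have hsum : ∑ i ∈ Finset.range n,
        dist ((l.getD i d0 : ↥X) : EuclideanSpace ℝ (Fin k))
          ((l.getD ((i+1) % n) d0 : ↥X) : EuclideanSpace ℝ (Fin k)) ^ k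
        = pathCost k l + dist (l.getLast hne) d0 ^ k := by
      rw [hm, Finset.sum_range_succ]
      have e0 : (m + 1) % (m + 1) = 0 := Nat.mod_self _
      rw [e0, hzero, hlast, ← Subtype.dist_eq]
      have hmain : ∀ i ∈ Finset.range m,
          dist ((l.getD i d0 : ↥X) : EuclideanSpace ℝ (Fin k))
            ((l.getD ((i+1) % (m+1)) d0 : ↥X) : EuclideanSpace ℝ (Fin k)) ^ k
          = dist (l.getD i d0) (l.getD (i+1) d0) ^ k := by
        intro i hi
        rw [Finset.mem_range] at hi
        have h2 : (i + 1) % (m + 1) = i + 1 := Nat.mod_eq_of_lt (by omega)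
        rw [h2, ← Subtype.dist_eq]
      rw [Finset.sum_congr rfl hmain]
      have hml1 : l.length - 1 = m := by omega
      rw [pathCost_eq_sum k l d0, hml1]
    rw [hfs]
    calc ∑ i ∈ Finset.range n,
          dist ((l.getD i d0 : ↥X) : EuclideanSpace ℝ (Fin k))
            ((l.getD ((i+1) % n) d0 : ↥X) : EuclideanSpace ℝ (Fin k)) ^ k
        = pathCost k l + dist (l.getLast hne) d0 ^ k := hsum
      _ ≤ pathCost k l + c * dist t.root (l.getLast hne) ^ k := by
          have h0 : (0:ℝ) ≤ dist t.root (l.getLast hne) ^ k := pow_nonneg dist_nonneg _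
          have he : dist (l.getLast hne) d0 ^ k = dist t.root (l.getLast hne) ^ k := by
            rw [dist_comm, hhead]
          rw [he]
          nlinarith
      _ ≤ 2 * c * wt k t := hineq
      _ ≤ 2 * c * ∑ e ∈ hfin.toFinset, edgeCost k e := by
          apply mul_le_mul_of_nonneg_left hwt
          positivity
      _ = (2 / 3 : ℝ) * 3 ^ k * ∑ e ∈ hfin.toFinset, edgeCost k e := by
          have h3 : (3:ℝ) ^ k = 3 * 3 ^ (k - 1) := by
            conv_lhs => rw [show k = (k-1)+1 by omega]
            rw [pow_succ]
            ring
          rw [hc, h3]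
          ring
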